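/- Let p be an odd integer, a_1,...,a_r integers with pairwise differences coprime to p, and V the r×r Vandermonde matrix over R_p = F_2[x]/(1+x^p) with entries x^{(j-1)a_i}. For every v ∈ R_p^r with v_1(1) = ... = v_r(1), there exists u ∈ R_p^r with u·V = v; moreover, any two solutions u, u' satisfy u ≡ u' componentwise modulo M_p(x). -/

import Mathlib

open Polynomial

private lemma char2neg (q : Polynomial (ZMod 2)) : -q = q := CharTwo.neg_eq q

private lemma MpFact (p : ℕ) :
    (X - 1 : Polynomial (ZMod 2)) * (∑ n ∈ Finset.range p, (X : Polynomial (ZMod 2)) ^ n)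
      = 1 + X ^ p := by
  rw [mul_comm, geom_sum_mul, sub_eq_add_neg, char2neg, add_comm]

private lemma evalM (p : ℕ) (hp : Odd p) :
    (∑ n ∈ Finset.range p, (X : Polynomial (ZMod 2)) ^ n).eval 1 = 1 := by
  simp only [eval_finset_sum, eval_pow, eval_X, one_pow, Finset.sum_const,
    Finset.card_range, nsmul_eq_mul, mul_one]
  rw [← ZMod.natCast_mod, Nat.odd_iff.mp hp]
  norm_num

private lemma coprimeKJ (p : ℕ) (hp : Odd p) :
    Ideal.span ({X - 1} : Set (Polynomial (ZMod 2)))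
      ⊔ Ideal.span ({∑ n ∈ Finset.range p, (X : Polynomial (ZMod 2)) ^ n} : Set (Polynomial (ZMod 2))) = ⊤ := by
  rw [Ideal.eq_top_iff_one]
  have h1 : (X - 1 : Polynomial (ZMod 2)) ∣ ((∑ n ∈ Finset.range p, (X : Polynomial (ZMod 2)) ^ n) - 1) := by
    rw [← C_1, dvd_iff_isRoot]
    simp [IsRoot, evalM p hp]
  have hK : ((∑ n ∈ Finset.range p, (X : Polynomial (ZMod 2)) ^ n) - 1)
      ∈ Ideal.span ({X - 1} : Set (Polynomial (ZMod 2)))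
      ⊔ Ideal.span ({∑ n ∈ Finset.range p, (X : Polynomial (ZMod 2)) ^ n} : Set (Polynomial (ZMod 2))) :=
    Ideal.mem_sup_left (Ideal.mem_span_singleton.mpr h1)
  have hJ : (∑ n ∈ Finset.range p, (X : Polynomial (ZMod 2)) ^ n)
      ∈ Ideal.span ({X - 1} : Set (Polynomial (ZMod 2)))
      ⊔ Ideal.span ({∑ n ∈ Finset.range p, (X : Polynomial (ZMod 2)) ^ n} : Set (Polynomial (ZMod 2))) :=
    Ideal.mem_sup_right (Ideal.subset_span rfl)
  have h3 := Submodule.sub_mem _ hJ hK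
  rwa [sub_sub_cancel] at h3

private lemma spanI (p : ℕ) (hp : Odd p) :
    Ideal.span ({1 + X ^ p} : Set (Polynomial (ZMod 2)))
      = Ideal.span ({X - 1} : Set (Polynomial (ZMod 2)))
        ⊓ Ideal.span ({∑ n ∈ Finset.range p, (X : Polynomial (ZMod 2)) ^ n} : Set (Polynomial (ZMod 2))) := by
  rw [← Ideal.mul_eq_inf_of_coprime (coprimeKJ p hp), Ideal.span_singleton_mul_span_singleton,
    MpFact]

private noncomputable def Jq (p : ℕ) :=
  Ideal.Quotient.mk (Ideal.span ({∑ n ∈ Finset.range p, (X : Polynomial (ZMod 2)) ^ n} : Set (Polynomial (ZMod 2))))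

private lemma wp1 (p : ℕ) (hp : Odd p) : (Jq p X) ^ p = 1 := by
  have hmem : ((X : Polynomial (ZMod 2)) ^ p - 1)
      ∈ Ideal.span ({∑ n ∈ Finset.range p, (X : Polynomial (ZMod 2)) ^ n} : Set (Polynomial (ZMod 2))) := by
    refine Ideal.mem_span_singleton.mpr ⟨X - 1, ?_⟩
    rw [mul_comm, ← geom_sum_mul, mul_comm]
  have := (Ideal.Quotient.eq (I := Ideal.span ({∑ n ∈ Finset.range p, (X : Polynomial (ZMod 2)) ^ n} : Set (Polynomial (ZMod 2))))).mpr hmem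
  simpa [Jq] using this

private lemma unitW (p : ℕ) (hp : Odd p) : IsUnit (Jq p X) := by
  have hp0 : p ≠ 0 := by rintro rfl; simp at hp
  refine IsUnit.of_mul_eq_one ((Jq p X) ^ (p - 1)) ?_
  have hpp : p - 1 + 1 = p := by omega
  rw [← pow_succ', hpp, wp1 p hp]

private lemma unitWsub (p : ℕ) (hp : Odd p) : IsUnit (Jq p X - 1) := by
  have h1 : (X - 1 : Polynomial (ZMod 2)) ∣ ((∑ n ∈ Finset.range p, (X : Polynomial (ZMod 2)) ^ n) - 1) := by
    rw [← C_1, dvd_iff_isRoot]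
    simp [IsRoot, evalM p hp]
  obtain ⟨q, hq⟩ := h1
  refine IsUnit.of_mul_eq_one (-(Jq p q)) ?_
  have h2 : Jq p ((∑ n ∈ Finset.range p, (X : Polynomial (ZMod 2)) ^ n)) = 0 :=
    Ideal.Quotient.eq_zero_iff_mem.mpr (Ideal.subset_span rfl)
  have h3 := congrArg (Jq p) hq
  simp only [map_sub, map_mul, map_one, h2, zero_sub] at h3
  linear_combination h3

private lemma unitWd (p : ℕ) (hp : Odd p) (d : ℕ) (hd : Nat.Coprime d p) :
    IsUnit ((Jq p X) ^ d - 1) := by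
  rcases eq_or_lt_of_le (Nat.one_le_iff_ne_zero.mpr (by rintro rfl; simp at hp) : 1 ≤ p) with h1 | h2
  · -- p = 1 : quotient is trivial
    have : Ideal.span ({∑ n ∈ Finset.range p, (X : Polynomial (ZMod 2)) ^ n} : Set (Polynomial (ZMod 2))) = ⊤ := by
      rw [← h1]
      simp [Ideal.span_singleton_eq_top]
    haveI := Ideal.Quotient.subsingleton_iff.mpr this
    exact isUnit_of_subsingleton _
  · -- p ≥ 2
    haveI : NeZero p := ⟨by omega⟩
    have hu : IsUnit (d : ZMod p) := (ZMod.isUnit_iff_coprime d p).mpr hd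
    set s : ℕ := (↑hu.unit⁻¹ : ZMod p).val with hs
    have hds : ((d * s : ℕ) : ZMod p) = ((1 : ℕ) : ZMod p) := by
      push_cast
      rw [hs, ZMod.natCast_val, ZMod.cast_id]
      exact hu.mul_val_inv
    have hmod : d * s ≡ 1 [MOD p] := (ZMod.natCast_eq_natCast_iff _ _ _).mp hds
    have h1lt : 1 % p = 1 := Nat.mod_eq_of_lt h2
    have hmod' : d * s % p = 1 := by rwa [Nat.ModEq, h1lt] at hmod
    have hk : d * s = p * (d * s / p) + 1 := by
      conv_lhs => rw [← Nat.div_add_mod (d * s) p]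
      rw [hmod']
    -- w^(d*s) = w
    have hw : ((Jq p X) ^ d) ^ s = Jq p X := by
      rw [← pow_mul, hk, pow_succ, pow_mul, wp1 p hp, one_pow, one_mul]
    have hgeo := geom_sum_mul ((Jq p X) ^ d) s
    rw [hw] at hgeo
    exact isUnit_of_mul_isUnit_right (hgeo ▸ unitWsub p hp)

private lemma unitDiff (p : ℕ) (hp : Odd p) (m n : ℕ)
    (h : Int.gcd ((m : ℤ) - (n : ℤ)) (p : ℤ) = 1) :
    IsUnit ((Jq p X) ^ m - (Jq p X) ^ n) := by
  have key : ∀ m n : ℕ, n ≤ m → Int.gcd ((m : ℤ) - (n : ℤ)) (p : ℤ) = 1 →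
      IsUnit ((Jq p X) ^ m - (Jq p X) ^ n) := by
    intro m n hnm hg
    have hd : Nat.Coprime (m - n) p := by
      have : ((m : ℤ) - (n : ℤ)).natAbs = m - n := by omega
      rwa [Int.gcd, this, Int.natAbs_natCast] at hg
    have hfac : (Jq p X) ^ m - (Jq p X) ^ n = (Jq p X) ^ n * ((Jq p X) ^ (m - n) - 1) := by
      rw [mul_sub, mul_one, ← pow_add]
      congr 2
      omega
    rw [hfac]
    exact ((unitW p hp).pow n).mul (unitWd p hp (m - n) hd)
  rcases le_total n m with hle | hle
  · exact key m n hle h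
  · have hg' : Int.gcd ((n : ℤ) - (m : ℤ)) (p : ℤ) = 1 := by
      rw [Int.gcd]  at h ⊢
      rw [show (n : ℤ) - m = -((m:ℤ) - n) by ring, Int.natAbs_neg]
      exact h
    have := (key n m hle hg').neg
    rwa [neg_sub] at this

private lemma detUnit (p r : ℕ) (hp : Odd p) (a : Fin r → ℕ)
    (ha : ∀ i j : Fin r, i ≠ j → Int.gcd ((a i : ℤ) - (a j : ℤ)) (p : ℤ) = 1) :
    IsUnit (Matrix.det (Matrix.of fun (j i : Fin r) => (Jq p X) ^ ((j : ℕ) * a i))) := by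
  have hW : (Matrix.of fun (j i : Fin r) => (Jq p X) ^ ((j : ℕ) * a i))
      = Matrix.transpose (Matrix.vandermonde fun i => (Jq p X) ^ (a i)) := by
    ext j i
    rw [Matrix.transpose_apply, Matrix.vandermonde_apply, Matrix.of_apply, pow_mul']
  rw [hW, Matrix.det_transpose, Matrix.det_vandermonde]
  refine Finset.prod_induction _ IsUnit (fun _ _ => IsUnit.mul) isUnit_one ?_
  intro i _
  refine Finset.prod_induction _ IsUnit (fun _ _ => IsUnit.mul) isUnit_one ?_
  intro j hj
  have hne : j ≠ i := ne_of_gt (Finset.mem_Ioi.mp hj)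
  exact unitDiff p hp (a j) (a i) (ha j i hne)

theorem vandermonde_solvable_and_unique_mod_Mp (p r : ℕ) (hp : Odd p) (a : Fin r → ℕ)
    (ha : ∀ i j : Fin r, i ≠ j → Int.gcd ((a i : ℤ) - (a j : ℤ)) (p : ℤ) = 1)
    (v : Fin r → Polynomial (ZMod 2))
    (hv : ∀ j₁ j₂ : Fin r, (v j₁).eval 1 = (v j₂).eval 1) :
    (∃ u : Fin r → Polynomial (ZMod 2), ∀ j : Fin r,
      Ideal.Quotient.mk (Ideal.span ({1 + X ^ p} : Set (Polynomial (ZMod 2))))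
          (∑ i : Fin r, u i * X ^ ((j : ℕ) * a i))
        = Ideal.Quotient.mk (Ideal.span ({1 + X ^ p} : Set (Polynomial (ZMod 2)))) (v j)) ∧
    ∀ u u' : Fin r → Polynomial (ZMod 2),
      (∀ j : Fin r,
        Ideal.Quotient.mk (Ideal.span ({1 + X ^ p} : Set (Polynomial (ZMod 2))))
            (∑ i : Fin r, u i * X ^ ((j : ℕ) * a i))
          = Ideal.Quotient.mk (Ideal.span ({1 + X ^ p} : Set (Polynomial (ZMod 2)))) (v j)) →
      (∀ j : Fin r,
        Ideal.Quotient.mk (Ideal.span ({1 + X ^ p} : Set (Polynomial (ZMod 2))))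
            (∑ i : Fin r, u' i * X ^ ((j : ℕ) * a i))
          = Ideal.Quotient.mk (Ideal.span ({1 + X ^ p} : Set (Polynomial (ZMod 2)))) (v j)) →
      ∀ i : Fin r,
        Ideal.Quotient.mk (Ideal.span
            ({∑ n ∈ Finset.range p, (X : Polynomial (ZMod 2)) ^ n} : Set (Polynomial (ZMod 2))))
            (u i)
          = Ideal.Quotient.mk (Ideal.span
            ({∑ n ∈ Finset.range p, (X : Polynomial (ZMod 2)) ^ n} : Set (Polynomial (ZMod 2))))
            (u' i) := by
  classical
  have hI := spanI p hp
  -- notation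
  set Jid : Ideal (Polynomial (ZMod 2)) :=
    Ideal.span ({∑ n ∈ Finset.range p, (X : Polynomial (ZMod 2)) ^ n} : Set (Polynomial (ZMod 2))) with hJid
  set Kid : Ideal (Polynomial (ZMod 2)) :=
    Ideal.span ({X - 1} : Set (Polynomial (ZMod 2))) with hKid
  set Iid : Ideal (Polynomial (ZMod 2)) :=
    Ideal.span ({1 + X ^ p} : Set (Polynomial (ZMod 2))) with hIid
  set W : Matrix (Fin r) (Fin r) (Polynomial (ZMod 2) ⧸ Jid) :=
    Matrix.of (fun j i => (Jq p X) ^ ((j : ℕ) * a i)) with hWdef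
  have hdet : IsUnit W.det := detUnit p r hp a ha
  have hWW : W * W⁻¹ = 1 := Matrix.mul_nonsing_inv W hdet
  have hWW' : W⁻¹ * W = 1 := Matrix.nonsing_inv_mul W hdet
  have hmkJ : ∀ (g : Fin r → Polynomial (ZMod 2)) (j : Fin r),
      Jq p (∑ i : Fin r, g i * X ^ ((j : ℕ) * a i))
        = W.mulVec (fun i => Jq p (g i)) j := by
    intro g j
    rw [map_sum]
    simp only [Matrix.mulVec, dotProduct, map_mul, map_pow, hWdef, Matrix.of_apply]
    exact Finset.sum_congr rfl fun i _ => mul_comm _ _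
  have hvK : ∀ j₁ j₂ : Fin r, Ideal.Quotient.mk Kid (v j₁) = Ideal.Quotient.mk Kid (v j₂) := by
    intro j₁ j₂
    refine Ideal.Quotient.eq.mpr (Ideal.mem_span_singleton.mpr ?_)
    rw [← C_1, dvd_iff_isRoot]
    simp [IsRoot, hv j₁ j₂]
  have hKX : (Ideal.Quotient.mk Kid) (X : Polynomial (ZMod 2)) = 1 := by
    have h1 : (X : Polynomial (ZMod 2)) - 1 ∈ Kid := Ideal.subset_span rfl
    have h2 := Ideal.Quotient.eq_zero_iff_mem.mpr h1
    rwa [map_sub, map_one, sub_eq_zero] at h2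
  constructor
  · -- existence
    obtain ⟨e, he, f, hf, hef⟩ := Submodule.mem_sup.mp
      ((Ideal.eq_top_iff_one _).mp (coprimeKJ p hp))
    set vb : Fin r → (Polynomial (ZMod 2) ⧸ Jid) := fun j => Jq p (v j) with hvb
    set ub : Fin r → (Polynomial (ZMod 2) ⧸ Jid) := W⁻¹.mulVec vb with hub
    choose uJ huJ using fun i => Ideal.Quotient.mk_surjective (I := Jid) (ub i)
    set uK : Fin r → Polynomial (ZMod 2) := fun i => if (i : ℕ) = 0 then v i else 0 with huK
    refine ⟨fun i => uK i * f + uJ i * e, fun j => ?_⟩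
    have hfJ : Jq p f = 0 := Ideal.Quotient.eq_zero_iff_mem.mpr hf
    have heJ : Jq p e = 1 := by
      have h3 : e = 1 - f := by rw [← hef]; ring
      rw [h3, map_sub, map_one, hfJ, sub_zero]
    have heK : Ideal.Quotient.mk Kid e = 0 := Ideal.Quotient.eq_zero_iff_mem.mpr he
    have hfK : Ideal.Quotient.mk Kid f = 1 := by
      have h3 : f = 1 - e := by rw [← hef]; ring
      rw [h3, map_sub, map_one, heK, sub_zero]
    have hmkJu : ∀ i, Jq p (uK i * f + uJ i * e) = ub i := by
      intro i
      rw [map_add, map_mul, map_mul, hfJ, heJ, mul_zero, mul_one, zero_add]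
      exact huJ i
    refine Ideal.Quotient.eq.mpr ?_
    rw [hI]
    refine Submodule.mem_inf.mpr ⟨?_, ?_⟩
    · -- mod K
      refine Ideal.Quotient.eq.mp ?_
      have hsum : (Ideal.Quotient.mk Kid) (∑ i : Fin r, (uK i * f + uJ i * e) * X ^ ((j : ℕ) * a i))
          = ∑ i : Fin r, (Ideal.Quotient.mk Kid) (uK i) := by
        rw [map_sum]
        refine Finset.sum_congr rfl fun i _ => ?_
        rw [map_mul, map_pow, hKX, one_pow, mul_one, map_add, map_mul, map_mul, heK, hfK,
          mul_zero, mul_one, add_zero]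
      rw [hsum]
      have i0 : Fin r := ⟨0, j.pos⟩
      rw [Finset.sum_eq_single_of_mem (⟨0, j.pos⟩ : Fin r) (Finset.mem_univ _) ?side]
      · rw [huK]
        simp only [if_pos rfl]
        exact hvK _ j
      case side =>
        intro b _ hb
        rw [huK]
        simp only
        rw [if_neg, map_zero]
        intro hb0
        exact hb (Fin.ext hb0)
    · -- mod J
      refine Ideal.Quotient.eq.mp ?_
      show Jq p _ = Jq p (v j)
      rw [hmkJ]
      have h4 : (fun i => Jq p (uK i * f + uJ i * e)) = ub := funext hmkJu
      rw [h4, hub, Matrix.mulVec_mulVec, hWW, Matrix.one_mulVec]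
  · -- uniqueness
    intro u u' hu hu' i
    set z : Fin r → (Polynomial (ZMod 2) ⧸ Jid) := fun k => Jq p (u k) - Jq p (u' k) with hz
    have hmv : W.mulVec z = 0 := by
      funext j
      have h1 : Ideal.Quotient.mk Iid (∑ i : Fin r, u i * X ^ ((j : ℕ) * a i))
          = Ideal.Quotient.mk Iid (∑ i : Fin r, u' i * X ^ ((j : ℕ) * a i)) :=
        (hu j).trans (hu' j).symm
      have h2 := Ideal.Quotient.eq.mp h1
      rw [hI] at h2
      have h3 : Jq p (∑ i : Fin r, u i * X ^ ((j : ℕ) * a i))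
          = Jq p (∑ i : Fin r, u' i * X ^ ((j : ℕ) * a i)) :=
        Ideal.Quotient.eq.mpr (Submodule.mem_inf.mp h2).2
      rw [hmkJ, hmkJ] at h3
      have h5 : W.mulVec z = W.mulVec (fun i => Jq p (u i)) - W.mulVec (fun i => Jq p (u' i)) := by
        rw [← Matrix.mulVec_sub]
        rfl
      rw [h5]
      simp only [Pi.sub_apply, Pi.zero_apply, h3, sub_self]
    have hz0 : z = 0 := by
      have h6 : z = (W⁻¹ * W).mulVec z := by rw [hWW', Matrix.one_mulVec]
      rw [h6, ← Matrix.mulVec_mulVec, hmv, Matrix.mulVec_zero]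
    have h7 := congrFun hz0 i
    simp only [hz, Pi.zero_apply, sub_eq_zero] at h7
    exact h7
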